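/- For every integer s ≥ 2 there exists a constant C_s > 0 such that for all integers p ≥ 1 and m ≥ 1, R_{s,p}(m) ≤ C_s·p·M^p·ζ_c^{-m}·m^{-3/2}. -/

import Mathlib

open Real
open scoped Nat

/-- Raney number `R_{s,p}(n) = (p/(s·n+p))·C(s·n+p, n)` as a real number. -/
noncomputable def raney (s p n : ℕ) : ℝ :=
  (p : ℝ) / (s * n + p) * (Nat.choose (s * n + p) n : ℝ)

/-- The analytic threshold `ζ_c = (s-1)^{s-1}/s^s`. -/
noncomputable def zetaC (s : ℕ) : ℝ := ((s : ℝ) - 1) ^ (s - 1) / (s : ℝ) ^ s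

/-- `M = s/(s-1)`. -/
noncomputable def Mconst (s : ℕ) : ℝ := (s : ℝ) / ((s : ℝ) - 1)

lemma hs1R (s : ℕ) (hs : 2 ≤ s) : (1:ℝ) ≤ (s:ℝ) - 1 := by
  have : (2:ℝ) ≤ s := by exact_mod_cast hs
  linarith


lemma stirling_lower (n : ℕ) (hn : 1 ≤ n) :
    Real.sqrt π * (Real.sqrt (2 * n) * ((n : ℝ) / Real.exp 1) ^ n) ≤ (n ! : ℝ) := by
  have hd : 0 < Real.sqrt (2 * n) * ((n : ℝ) / Real.exp 1) ^ n := by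
    have : (0:ℝ) < n := by exact_mod_cast hn
    positivity
  have hπ : Real.sqrt π ≤ Stirling.stirlingSeq n := by
    obtain ⟨k, rfl⟩ := Nat.exists_eq_add_of_le hn
    have h1 : Filter.Tendsto (fun j => Stirling.stirlingSeq (j + 1)) Filter.atTop
        (nhds (Real.sqrt π)) :=
      Stirling.tendsto_stirlingSeq_sqrt_pi.comp (Filter.tendsto_add_atTop_nat 1)
    have := le_of_tendsto h1 (Filter.eventually_atTop.2 ⟨k, fun j hj =>
      Stirling.stirlingSeq'_antitone hj⟩ : ∀ᶠ j in Filter.atTop, Stirling.stirlingSeq (j+1) ≤ Stirling.stirlingSeq (k+1))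
    simpa [Nat.add_comm] using this
  have := mul_le_mul_of_nonneg_right hπ hd.le
  calc Real.sqrt π * (Real.sqrt (2 * n) * ((n : ℝ) / Real.exp 1) ^ n)
      ≤ Stirling.stirlingSeq n * (Real.sqrt (2 * n) * ((n : ℝ) / Real.exp 1) ^ n) := this
    _ = (n ! : ℝ) := by rw [Stirling.stirlingSeq, div_mul_cancel₀]; exact hd.ne'

lemma stirling_upper (n : ℕ) (hn : 1 ≤ n) :
    (n ! : ℝ) ≤ (Real.exp 1 / Real.sqrt 2) * (Real.sqrt (2 * n) * ((n : ℝ) / Real.exp 1) ^ n) := by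
  have hd : 0 < Real.sqrt (2 * n) * ((n : ℝ) / Real.exp 1) ^ n := by
    have : (0:ℝ) < n := by exact_mod_cast hn
    positivity
  have hup : Stirling.stirlingSeq n ≤ Real.exp 1 / Real.sqrt 2 := by
    obtain ⟨k, rfl⟩ := Nat.exists_eq_add_of_le hn
    have := Stirling.stirlingSeq'_antitone (Nat.zero_le k)
    simpa [Nat.add_comm, Stirling.stirlingSeq_one] using this
  have heq : (n ! : ℝ) = Stirling.stirlingSeq n * (Real.sqrt (2 * n) * ((n : ℝ) / Real.exp 1) ^ n) := by
    rw [Stirling.stirlingSeq, div_mul_cancel₀]; exact hd.ne'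
  rw [heq]
  exact mul_le_mul_of_nonneg_right hup hd.le



lemma succ_choose (n k : ℕ) (hk : k ≤ n) :
    (n+1).choose k * (n+1-k) = n.choose k * (n+1) := by
  have h1 := Nat.choose_mul_factorial_mul_factorial (Nat.le_succ_of_le hk)
  have h2 := Nat.choose_mul_factorial_mul_factorial hk
  have h3 : n + 1 - k = (n - k) + 1 := by omega
  have h4 : (n+1-k)! = (n+1-k) * (n-k)! := by rw [h3, Nat.factorial_succ]
  have h5 : (n+1)! = (n+1) * n ! := by rw [Nat.factorial_succ]
  have hpos : 0 < k ! * (n-k)! := Nat.mul_pos k.factorial_pos (n-k).factorial_pos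
  apply Nat.eq_of_mul_eq_mul_right hpos
  calc (n+1).choose k * (n+1-k) * (k ! * (n-k)!)
      = (n+1).choose k * k ! * ((n+1-k) * (n-k)!) := by ring
    _ = (n+1).choose k * k ! * (n+1-k)! := by rw [h4]
    _ = (n+1)! := h1
    _ = (n+1) * (n.choose k * k ! * (n-k)!) := by rw [h5, h2]
    _ = n.choose k * (n+1) * (k ! * (n-k)!) := by ring


lemma step_real (s m p : ℕ) (hs : 2 ≤ s) :
    (((s*m+p+1).choose m : ℕ) : ℝ) ≤ Mconst s * (((s*m+p).choose m : ℕ) : ℝ) := by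
  have hsm : (s-1)*m + m = s*m := by
    obtain ⟨s', rfl⟩ := Nat.exists_eq_add_of_le hs
    simp [Nat.succ_mul, Nat.add_mul]
    omega
  have hm_le : m ≤ s*m+p := le_trans (Nat.le_mul_of_pos_left m (by omega)) (Nat.le_add_right _ _)
  have h := succ_choose (s*m+p) m hm_le
  have hsub : s*m+p+1-m = (s-1)*m+p+1 := by omega
  rw [hsub] at h
  have hR : (((s*m+p+1).choose m : ℕ) : ℝ) * (((s:ℝ)-1)*m+p+1)
      = (((s*m+p).choose m : ℕ) : ℝ) * ((s:ℝ)*m+p+1) := by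
    have := congrArg (Nat.cast : ℕ → ℝ) h
    push_cast [Nat.cast_sub (by omega : 1 ≤ s)] at this
    convert this using 2 <;> ring
  have hs1 : (1:ℝ) ≤ (s:ℝ) - 1 := hs1R s hs
  have hd : (0:ℝ) < ((s:ℝ)-1)*m+p+1 := by positivity
  have hC : (0:ℝ) ≤ (((s*m+p).choose m : ℕ) : ℝ) := Nat.cast_nonneg _
  rw [Mconst]
  rw [div_mul_eq_mul_div, le_div_iff₀ (by linarith : (0:ℝ) < (s:ℝ)-1)]
  calc (((s*m+p+1).choose m : ℕ) : ℝ) * ((s:ℝ)-1)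
      ≤ (((s*m+p).choose m : ℕ) : ℝ) * (s:ℝ) := ?_
    _ = (s:ℝ) * (((s*m+p).choose m : ℕ) : ℝ) := by ring
  -- multiply both sides by hd and use hR
  rw [← mul_le_mul_iff_of_pos_right hd]
  calc (((s*m+p+1).choose m : ℕ) : ℝ) * ((s:ℝ)-1) * (((s:ℝ)-1)*m+p+1)
      = ((s:ℝ)-1) * ((((s*m+p+1).choose m : ℕ) : ℝ) * (((s:ℝ)-1)*m+p+1)) := by ring
    _ = ((s:ℝ)-1) * ((((s*m+p).choose m : ℕ) : ℝ) * ((s:ℝ)*m+p+1)) := by rw [hR]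
    _ ≤ (((s*m+p).choose m : ℕ) : ℝ) * (s:ℝ) * (((s:ℝ)-1)*m+p+1) := by nlinarith [hC]

lemma choose_bound (s m : ℕ) (hs : 2 ≤ s) (q : ℕ) :
    (((s*m+1+q).choose m : ℕ) : ℝ) ≤ Mconst s ^ q * (((s*m+1).choose m : ℕ) : ℝ) := by
  have hM : (0:ℝ) < Mconst s := by
    have := hs1R s hs
    have hspos : (0:ℝ) < s := by positivity
    exact div_pos hspos (by linarith)
  induction q with
  | zero => simp
  | succ q ih =>
    have h1 : s*m+1+(q+1) = s*m+(1+q)+1 := by omega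
    have h2 := step_real s m (1+q) hs
    rw [h1]
    calc (((s*m+(1+q)+1).choose m : ℕ) : ℝ)
        ≤ Mconst s * (((s*m+(1+q)).choose m : ℕ) : ℝ) := h2
      _ = Mconst s * (((s*m+1+q).choose m : ℕ) : ℝ) := by rw [show s*m+(1+q) = s*m+1+q by omega]
      _ ≤ Mconst s * (Mconst s ^ q * (((s*m+1).choose m : ℕ) : ℝ)) := by
          exact mul_le_mul_of_nonneg_left ih hM.le
      _ = Mconst s ^ (q+1) * (((s*m+1).choose m : ℕ) : ℝ) := by ring



noncomputable def C0 (s : ℕ) : ℝ :=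
  (Real.exp 1 / Real.sqrt 2) * Real.sqrt s /
    (π * Real.sqrt 2 * Real.sqrt ((s:ℝ)-1) * ((s:ℝ)-1))

-- power-part identity
lemma pow_part (s m : ℕ) (hs : 2 ≤ s) (hm : 1 ≤ m) :
    ((↑(s*m):ℝ)/Real.exp 1)^(s*m)
      = (zetaC s)⁻¹ ^ m * (((m:ℝ)/Real.exp 1)^m * ((↑((s-1)*m):ℝ)/Real.exp 1)^((s-1)*m)) := by
  have hsm : (s-1)*m + m = s*m := by
    obtain ⟨s', rfl⟩ := Nat.exists_eq_add_of_le hs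
    simp [Nat.add_mul]; omega
  have hs1 : (1:ℝ) ≤ (s:ℝ) - 1 := hs1R s hs
  have hne : ((s:ℝ)-1) ≠ 0 := by linarith
  have h1 : ((↑(s*m):ℝ)/Real.exp 1) = (s:ℝ) * ((m:ℝ)/Real.exp 1) := by push_cast; ring
  have h2 : ((↑((s-1)*m):ℝ)/Real.exp 1) = ((s:ℝ)-1) * ((m:ℝ)/Real.exp 1) := by
    push_cast [Nat.cast_sub (by omega : 1 ≤ s)]; ring
  have hz : (zetaC s)⁻¹ ^ m = (s:ℝ)^(s*m) / ((s:ℝ)-1)^((s-1)*m) := by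
    rw [zetaC, inv_div, div_pow, ← pow_mul, ← pow_mul, Nat.mul_comm s m, Nat.mul_comm (s-1) m]
  have hd : (s:ℝ)^(s*m) = (zetaC s)⁻¹ ^ m * ((s:ℝ)-1)^((s-1)*m) := by
    rw [hz, div_mul_cancel₀]
    exact pow_ne_zero _ hne
  calc ((↑(s*m):ℝ)/Real.exp 1)^(s*m)
      = (s:ℝ)^(s*m) * ((m:ℝ)/Real.exp 1)^(s*m) := by rw [h1, mul_pow]
    _ = (s:ℝ)^(s*m) * (((m:ℝ)/Real.exp 1)^((s-1)*m) * ((m:ℝ)/Real.exp 1)^m) := by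
        rw [← pow_add, hsm]
    _ = (zetaC s)⁻¹ ^ m * ((s:ℝ)-1)^((s-1)*m) *
          (((m:ℝ)/Real.exp 1)^((s-1)*m) * ((m:ℝ)/Real.exp 1)^m) := by rw [← hd]
    _ = (zetaC s)⁻¹ ^ m * (((m:ℝ)/Real.exp 1)^m *
          ((((s:ℝ)-1) * ((m:ℝ)/Real.exp 1))^((s-1)*m))) := by rw [mul_pow]; ring
    _ = _ := by rw [h2]

lemma rpow_m32 (m : ℕ) (hm : 1 ≤ m) :
    (m:ℝ) ^ (-(3:ℝ)/2) = ((m:ℝ) * Real.sqrt m)⁻¹ := by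
  have hm0 : (0:ℝ) < m := by exact_mod_cast hm
  have h32 : (m:ℝ) ^ ((3:ℝ)/2) = (m:ℝ) * Real.sqrt m := by
    rw [show (3:ℝ)/2 = 1 + 1/2 by norm_num, Real.rpow_add hm0, Real.rpow_one,
      ← Real.sqrt_eq_rpow]
  rw [show -(3:ℝ)/2 = -((3:ℝ)/2) by ring, Real.rpow_neg hm0.le, h32]



lemma alg (e b c d f w a Z Pm PB mm : ℝ)
    (hb : b ≠ 0) (ha : a ≠ 0) (hd : d ≠ 0) (hf : f ≠ 0) (hw : w ≠ 0)
    (hPm : Pm ≠ 0) (hPB : PB ≠ 0) (hmm : mm ≠ 0) :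
    e/b * ((b*(c*f)) * (Z * (Pm * PB))) / (a*((b*f)*Pm) * (w*mm * (a*((b*(d*f))*PB))))
      = e/b*c/(a*a*b*d*w) * Z * (mm*f)⁻¹ := by
  field_simp

set_option maxHeartbeats 2000000 in
lemma key (s m : ℕ) (hs : 2 ≤ s) (hm : 1 ≤ m) :
    (((s*m+1).choose m : ℕ) : ℝ) / ((↑(s*m):ℝ)+1)
      ≤ C0 s * (zetaC s)⁻¹ ^ m * (m:ℝ) ^ (-(3:ℝ)/2) := by
  have hsm : (s-1)*m + m = s*m := by
    obtain ⟨s', rfl⟩ := Nat.exists_eq_add_of_le hs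
    simp [Nat.add_mul]; omega
  have hs1 : (1:ℝ) ≤ (s:ℝ) - 1 := hs1R s hs
  have hB1 : 1 ≤ (s-1)*m := Nat.one_le_iff_ne_zero.2 (Nat.mul_ne_zero (by omega) (by omega))
  have hA1 : 1 ≤ s*m := by omega
  have hm_le : m ≤ s*m+1 := by omega
  have hsub : s*m+1-m = (s-1)*m+1 := by omega
  have hNat := Nat.choose_mul_factorial_mul_factorial hm_le
  rw [hsub, Nat.factorial_succ ((s-1)*m), Nat.factorial_succ (s*m)] at hNat
  -- cast positivity facts
  have hm0 : (0:ℝ) < (m:ℝ) := by exact_mod_cast hm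
  have hA0 : (0:ℝ) < (↑(s*m):ℝ) := by exact_mod_cast hA1
  have hB0 : (0:ℝ) < (↑((s-1)*m):ℝ) := by exact_mod_cast hB1
  have hmf : (0:ℝ) < (m ! : ℝ) := by exact_mod_cast m.factorial_pos
  have hBf : (0:ℝ) < (((s-1)*m)! : ℝ) := by exact_mod_cast ((s-1)*m).factorial_pos
  have hR : (((s*m+1).choose m : ℕ) : ℝ) * ((m ! : ℝ) * (((↑((s-1)*m):ℝ)+1) * (((s-1)*m)! : ℝ)))
      = ((↑(s*m):ℝ)+1) * ((s*m)! : ℝ) := by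
    have := congrArg (Nat.cast : ℕ → ℝ) hNat
    push_cast at this ⊢
    linarith [this]
  have heq : (((s*m+1).choose m : ℕ) : ℝ) / ((↑(s*m):ℝ)+1)
      = ((s*m)! : ℝ) / ((m ! : ℝ) * (((↑((s-1)*m):ℝ)+1) * (((s-1)*m)! : ℝ))) := by
    rw [div_eq_div_iff (by linarith) (by positivity)]
    push_cast at hR ⊢
    linarith [hR]
  rw [heq]
  set e := Real.exp 1 with he
  have he0 : (0:ℝ) < e := Real.exp_pos 1
  set N := (e / Real.sqrt 2) * (Real.sqrt (2*(↑(s*m):ℝ)) * ((↑(s*m):ℝ)/e)^(s*m)) with hN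
  set Dm := Real.sqrt π * (Real.sqrt (2*(m:ℝ)) * ((m:ℝ)/e)^m) with hDm
  set Db := Real.sqrt π * (Real.sqrt (2*(↑((s-1)*m):ℝ)) * ((↑((s-1)*m):ℝ)/e)^((s-1)*m)) with hDb
  have hDm0 : 0 < Dm := by rw [hDm]; positivity
  have hDb0 : 0 < Db := by rw [hDb]; positivity
  have step1 : ((s*m)! : ℝ) / ((m ! : ℝ) * (((↑((s-1)*m):ℝ)+1) * (((s-1)*m)! : ℝ)))
      ≤ N / (Dm * ((↑((s-1)*m):ℝ) * Db)) := by
    apply div_le_div₀ (by positivity) (stirling_upper _ hA1) (by positivity)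
    have h1 : Dm ≤ (m ! : ℝ) := stirling_lower m hm
    have h2 : Db ≤ (((s-1)*m)! : ℝ) := stirling_lower _ hB1
    have h3 : (↑((s-1)*m):ℝ) ≤ (↑((s-1)*m):ℝ) + 1 := by linarith
    exact mul_le_mul h1 (mul_le_mul h3 h2 hDb0.le (by linarith)) (by positivity) hmf.le
  refine step1.trans (le_of_eq ?_)
  -- now the algebraic identity
  have hBcast : (↑((s-1)*m):ℝ) = ((s:ℝ)-1)*(m:ℝ) := by
    push_cast [Nat.cast_sub (by omega : 1 ≤ s)]; ring
  have hsA : Real.sqrt (2*(↑(s*m):ℝ)) = Real.sqrt 2 * (Real.sqrt s * Real.sqrt m) := by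
    rw [show (2*(↑(s*m):ℝ)) = 2*((s:ℝ)*(m:ℝ)) by push_cast; ring,
      Real.sqrt_mul (by norm_num), Real.sqrt_mul (by positivity)]
  have hsB : Real.sqrt (2*(↑((s-1)*m):ℝ)) = Real.sqrt 2 * (Real.sqrt ((s:ℝ)-1) * Real.sqrt m) := by
    rw [show (2*(↑((s-1)*m):ℝ)) = 2*(((s:ℝ)-1)*(m:ℝ)) by rw [hBcast],
      Real.sqrt_mul (by norm_num), Real.sqrt_mul (by positivity)]
  have hsm2 : Real.sqrt (2*(m:ℝ)) = Real.sqrt 2 * Real.sqrt m := Real.sqrt_mul (by norm_num) _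
  rw [hN, hDm, hDb, pow_part s m hs hm, hsA, hsB, hsm2, hBcast, rpow_m32 m hm, C0]
  set a := Real.sqrt π with ha
  rw [show π = a*a from (Real.mul_self_sqrt pi_pos.le).symm]
  have ha0 : (0:ℝ) < a := Real.sqrt_pos.2 pi_pos
  have hb0 : (0:ℝ) < Real.sqrt 2 := by positivity
  have hc0 : (0:ℝ) < Real.sqrt s := Real.sqrt_pos.2 (by positivity)
  have hd0 : (0:ℝ) < Real.sqrt ((s:ℝ)-1) := Real.sqrt_pos.2 (by linarith)
  have hf0 : (0:ℝ) < Real.sqrt m := Real.sqrt_pos.2 hm0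
  have hx0 : (0:ℝ) < ((m:ℝ)/e)^m := by positivity
  have hy0 : (0:ℝ) < (((↑((s-1)*m)):ℝ)/e)^((s-1)*m) := by positivity
  rw [hBcast] at hy0
  have hw0 : (0:ℝ) < (s:ℝ)-1 := by linarith
  exact alg _ _ _ _ _ _ _ _ _ _ _ hb0.ne' ha0.ne' hd0.ne' hf0.ne' hw0.ne' hx0.ne' hy0.ne' hm0.ne'


/-- Uniform upper bound: `R_{s,p}(m) ≤ C_s·p·M^p·ζ_c^{-m}·m^{-3/2}` for all
`p ≥ 1` and `m ≥ 1`. -/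
theorem stmt5 (s : ℕ) (hs : 2 ≤ s) :
    ∃ C : ℝ, 0 < C ∧ ∀ p m : ℕ, 1 ≤ p → 1 ≤ m →
      raney s p m ≤ C * p * Mconst s ^ p * (zetaC s)⁻¹ ^ m * (m : ℝ) ^ (-(3 : ℝ) / 2) := by
  have hs1 : (1:ℝ) ≤ (s:ℝ) - 1 := hs1R s hs
  have hw0 : (0:ℝ) < (s:ℝ) - 1 := by linarith
  have hC0 : 0 < C0 s := by
    rw [C0]
    apply div_pos
    · have := Real.sqrt_pos.2 (show (0:ℝ) < s by positivity)
      positivity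
    · have h1 : (0:ℝ) < Real.sqrt ((s:ℝ)-1) := Real.sqrt_pos.2 hw0
      have h2 : (0:ℝ) < Real.sqrt 2 := by positivity
      have := Real.pi_pos
      positivity
  refine ⟨C0 s, hC0, ?_⟩
  intro p m hp hm
  obtain ⟨q, rfl⟩ := Nat.exists_eq_add_of_le hp
  have hm0 : (0:ℝ) < (m:ℝ) := by exact_mod_cast hm
  have hp0 : (0:ℝ) < ((1+q:ℕ):ℝ) := by positivity
  have hp1 : (1:ℝ) ≤ ((1+q:ℕ):ℝ) := by exact_mod_cast hp
  have hz0 : 0 < zetaC s := div_pos (pow_pos hw0 _) (pow_pos (by positivity) _)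
  have hzi : (0:ℝ) < (zetaC s)⁻¹ ^ m := by positivity
  have hmr : (0:ℝ) < (m:ℝ) ^ (-(3:ℝ)/2) := Real.rpow_pos_of_pos hm0 _
  have hM0 : (0:ℝ) < Mconst s := div_pos (by positivity) hw0
  have hM1 : (1:ℝ) ≤ Mconst s := by
    rw [Mconst, le_div_iff₀ hw0]; linarith
  have hkey := key s m hs hm
  push_cast at hkey
  have h2 := choose_bound s m hs q
  rw [show s*m+1+q = s*m+(1+q) by omega] at h2
  have hd1 : (0:ℝ) < (s:ℝ)*(m:ℝ)+1 := by positivity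
  calc raney s (1+q) m
      = ((1+q:ℕ):ℝ) / ((s:ℝ)*(m:ℝ) + ((1+q:ℕ):ℝ)) * ((Nat.choose (s*m+(1+q)) m : ℕ) : ℝ) := by
        rw [raney]
    _ ≤ ((1+q:ℕ):ℝ) / ((s:ℝ)*(m:ℝ)+1) * (Mconst s ^ q * ((Nat.choose (s*m+1) m : ℕ) : ℝ)) := by
        apply mul_le_mul _ h2 (Nat.cast_nonneg _) (by positivity)
        apply div_le_div_of_nonneg_left hp0.le hd1
        linarith
    _ = (((1+q:ℕ):ℝ) * Mconst s ^ q) * (((Nat.choose (s*m+1) m : ℕ) : ℝ) / ((s:ℝ)*(m:ℝ)+1)) := by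
        ring
    _ ≤ (((1+q:ℕ):ℝ) * Mconst s ^ q) * (C0 s * (zetaC s)⁻¹ ^ m * (m:ℝ) ^ (-(3:ℝ)/2)) := by
        apply mul_le_mul_of_nonneg_left _ (by positivity)
        convert hkey using 3
        all_goals push_cast; ring
    _ = (C0 s * ((1+q:ℕ):ℝ) * (zetaC s)⁻¹ ^ m * (m:ℝ) ^ (-(3:ℝ)/2)) * Mconst s ^ q := by ring
    _ ≤ (C0 s * ((1+q:ℕ):ℝ) * (zetaC s)⁻¹ ^ m * (m:ℝ) ^ (-(3:ℝ)/2)) * Mconst s ^ (1+q) := by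
        apply mul_le_mul_of_nonneg_left (pow_le_pow_right₀ hM1 (by omega)) (by positivity)
    _ = C0 s * ((1+q:ℕ):ℝ) * Mconst s ^ (1+q) * (zetaC s)⁻¹ ^ m * (m:ℝ) ^ (-(3:ℝ)/2) := by ring
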